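/- Let X be a nonempty finite type and let μ, ν be probability mass functions on X such that ν(x) > 0 whenever μ(x) > 0. Define e^{D₂(μ‖ν)} = Σ_{x : ν(x)>0} μ(x)²/ν(x) and e^{D∞(μ‖ν)} = max_{x : ν(x)>0} μ(x)/ν(x). Let D̃ = (X₁,…,X_n) be n i.i.d. samples from μ and D̂ = (Y₁,…,Y_m) be m i.i.d. samples from ν, independent of D̃, and let X̂ = {Y₁,…,Y_m} ⊆ X be the support of D̂. Let Q be a nonempty finite set of queries φ : X → [0,1], and let α, β > 0. If n ≥ (8/α²)·log(4|Q|/β) and m ≥ ((32/α²)·e^{D₂(μ‖ν)} + (8/(3α))·e^{D∞(μ‖ν)})·log((4|Q|+4)/β), then with probability at least 1 − β (over both samples), f_{D̃,Q}(X̂) ≤ α. -/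

import Mathlib

open MeasureTheory

/-- The value of the statistical linear query given by `φ` on the dataset `D`:
`q_φ(D) = (1/n)·Σ_{i<n} φ(D_i)`. -/
noncomputable def qD {X : Type*} {n : ℕ} (φ : X → ℝ) (D : Fin n → X) : ℝ :=
  (∑ i, φ (D i)) / n

/-- The maximum error over the query class `Q` of the mixture with weights `μ` on `S`,
as an approximation of the dataset `D`. -/
noncomputable def mixErr {X : Type*} {n : ℕ} (D : Fin n → X) (Q : Finset (X → ℝ))
    (S : Finset X) (μ : X → ℝ) : ℝ :=
  sSup ((fun φ => |qD φ D - ∑ x ∈ S, μ x * φ x|) '' ↑Q)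

/-- The best mixture error `f_{D,Q}(S)`: the minimum over probability weights `μ` on `S`
of the maximum error over `Q` of the corresponding mixture. -/
noncomputable def bestMixErr {X : Type*} {n : ℕ} (D : Fin n → X) (Q : Finset (X → ℝ))
    (S : Finset X) : ℝ :=
  sInf {e : ℝ | ∃ μ : X → ℝ, (∀ x, 0 ≤ μ x) ∧ (∑ x ∈ S, μ x) = 1 ∧ e = mixErr D Q S μ}

/-- `e^{D₂(μ‖ν)} = Σ_{x : ν(x)>0} μ(x)²/ν(x)`. -/
noncomputable def expD2 {X : Type*} [Fintype X] (μ ν : PMF X) : ℝ :=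
  ∑ x ∈ Finset.univ.filter (fun x => ν x ≠ 0), ((μ x).toReal) ^ 2 / (ν x).toReal

/-- `e^{D∞(μ‖ν)} = max_{x : ν(x)>0} μ(x)/ν(x)`. -/
noncomputable def expDinf {X : Type*} (μ ν : PMF X) : ℝ :=
  sSup ((fun x => (μ x).toReal / (ν x).toReal) '' {x | ν x ≠ 0})


open Real
open scoped ENNReal

noncomputable def wfn {X : Type*} (μ ν : PMF X) (x : X) : ℝ := (μ x).toReal / (ν x).toReal

section AuxAnalysis


/-- `1 + (u-1)e^u ≥ 0` for all real `u`. -/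
lemma aux_G0 (u : ℝ) : 0 ≤ 1 + (u - 1) * Real.exp u := by
  have h := Real.add_one_le_exp (-u)
  have hu : 0 < Real.exp u := Real.exp_pos u
  have hmul : Real.exp (-u) * Real.exp u = 1 := by
    rw [← Real.exp_add]; simp
  nlinarith [mul_le_mul_of_nonneg_right h hu.le]

/-- `G(u) = u e^u + u - 2 e^u + 2` is monotone. -/
lemma aux_Gmono : Monotone (fun u : ℝ => u * Real.exp u + u - 2 * Real.exp u + 2) := by
  have hd : ∀ u : ℝ, HasDerivAt (fun u : ℝ => u * Real.exp u + u - 2 * Real.exp u + 2)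
      (1 + (u - 1) * Real.exp u) u := by
    intro u
    have h1 : HasDerivAt (fun u : ℝ => u * Real.exp u) (1 * Real.exp u + u * Real.exp u) u :=
      (hasDerivAt_id u).mul (Real.hasDerivAt_exp u)
    have h2 := ((h1.add (hasDerivAt_id u)).sub ((Real.hasDerivAt_exp u).const_mul 2)).add_const 2
    exact h2.congr_deriv (by ring)
  exact monotone_of_deriv_nonneg (fun u => (hd u).differentiableAt)
    (fun u => by rw [(hd u).deriv]; exact aux_G0 u)

lemma aux_G_nonneg {u : ℝ} (hu : 0 ≤ u) : 0 ≤ u * Real.exp u + u - 2 * Real.exp u + 2 := by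
  have := aux_Gmono hu
  simpa using this

lemma aux_G_nonpos {u : ℝ} (hu : u ≤ 0) : u * Real.exp u + u - 2 * Real.exp u + 2 ≤ 0 := by
  have := aux_Gmono hu
  simpa using this

/-- `ψ(z) = 1 + z + z²/2 - e^z` is antitone. -/
lemma aux_psi_anti : Antitone (fun z : ℝ => 1 + z + z ^ 2 / 2 - Real.exp z) := by
  have hd : ∀ z : ℝ, HasDerivAt (fun z : ℝ => 1 + z + z ^ 2 / 2 - Real.exp z)
      (1 + z - Real.exp z) z := by
    intro z
    have h1 : HasDerivAt (fun z : ℝ => z ^ 2 / 2) z z := by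
      have := (hasDerivAt_pow 2 z).div_const 2
      exact this.congr_deriv (by ring)
    have h2 := (((hasDerivAt_const z (1:ℝ)).add (hasDerivAt_id z)).add h1).sub
      (Real.hasDerivAt_exp z)
    exact h2.congr_deriv (by ring)
  exact antitone_of_deriv_nonpos (fun z => (hd z).differentiableAt)
    (fun z => by
      rw [(hd z).deriv]
      have := Real.add_one_le_exp z
      linarith)

lemma aux_quad_le_exp {z : ℝ} (hz : 0 ≤ z) : 1 + z + z ^ 2 / 2 ≤ Real.exp z := by
  have := aux_psi_anti hz
  simp only [Real.exp_zero] at this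
  nlinarith [this]

lemma aux_exp_le_quad {z : ℝ} (hz : z ≤ 0) : Real.exp z ≤ 1 + z + z ^ 2 / 2 := by
  have := aux_psi_anti hz
  simp only [Real.exp_zero] at this
  nlinarith [this]


/-- `F(u) = (e^u - 1 - u)/u²` is monotone on `(0,∞)`. -/
lemma aux_Fmono_pos : MonotoneOn (fun u : ℝ => (Real.exp u - 1 - u) / u ^ 2) (Set.Ioi 0) := by
  have hd : ∀ u : ℝ, u ∈ Set.Ioi (0:ℝ) → HasDerivAt (fun u : ℝ => (Real.exp u - 1 - u) / u ^ 2)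
      ((u * Real.exp u + u - 2 * Real.exp u + 2) / u ^ 3) u := by
    intro u hu
    have hu0 : (u:ℝ) ≠ 0 := ne_of_gt hu
    have h1 : HasDerivAt (fun u : ℝ => Real.exp u - 1 - u) (Real.exp u - 1) u :=
      ((Real.hasDerivAt_exp u).sub_const 1).sub (hasDerivAt_id u)
    have h2 := h1.div (hasDerivAt_pow 2 u) (by positivity)
    refine h2.congr_deriv ?_
    field_simp
    ring
  apply monotoneOn_of_deriv_nonneg (convex_Ioi 0)
  · exact ContinuousOn.div (by fun_prop) (by fun_prop)
      (fun u hu => by have : (0:ℝ) < u := hu; positivity)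
  · intro u hu
    rw [interior_Ioi] at hu
    exact ((hd u hu).differentiableAt).differentiableWithinAt
  · intro u hu
    rw [interior_Ioi] at hu
    rw [(hd u hu).deriv]
    have h3 : (0:ℝ) < u := hu
    have := aux_G_nonneg h3.le
    positivity

/-- Bernstein pointwise bound: for `y ≤ b`, `e^{ly} ≤ 1 + ly + y²·(e^{lb}-1-lb)/b²`. -/
lemma aux_key_pointwise {b l y : ℝ} (hb : 0 < b) (hl : 0 < l) (hy : y ≤ b) :
    Real.exp (l * y) ≤ 1 + l * y + y ^ 2 * ((Real.exp (l * b) - 1 - l * b) / b ^ 2) := by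
  have hcb : 0 ≤ Real.exp (l * b) - 1 - l * b := by
    have := Real.add_one_le_exp (l * b); linarith
  rcases eq_or_ne y 0 with rfl | hy0
  · simp
  have hF : (Real.exp (l*y) - 1 - l*y) / (l*y) ^ 2 ≤ (Real.exp (l*b) - 1 - l*b) / (l*b) ^ 2 := by
    rcases lt_or_gt_of_ne hy0 with hneg | hpos
    · -- y < 0 : cross zero
      have hly : l * y ≤ 0 := by nlinarith
      have h1 : (Real.exp (l*y) - 1 - l*y) / (l*y) ^ 2 ≤ 1/2 := by
        have h2 := aux_exp_le_quad hly
        have h3 : (0:ℝ) < (l*y)^2 := by positivity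
        rw [div_le_div_iff₀ h3 (by norm_num)]
        nlinarith
      have h4 : (1:ℝ)/2 ≤ (Real.exp (l*b) - 1 - l*b) / (l*b) ^ 2 := by
        have h2 := aux_quad_le_exp (by positivity : (0:ℝ) ≤ l*b)
        have h3 : (0:ℝ) < (l*b)^2 := by positivity
        rw [div_le_div_iff₀ (by norm_num) h3]
        nlinarith
      linarith
    · exact aux_Fmono_pos (Set.mem_Ioi.2 (by positivity)) (Set.mem_Ioi.2 (by positivity))
        (by nlinarith)
  have hly2 : (l*y)^2 = l^2 * y^2 := by ring
  have hb2 : (0:ℝ) < b^2 := by positivity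
  have hy2 : (0:ℝ) < y^2 := by positivity
  have hl2 : (0:ℝ) < l^2 := by positivity
  rw [div_le_div_iff₀ (by positivity) (by positivity)] at hF
  have goal2 : Real.exp (l*y) - 1 - l*y ≤ y^2 * ((Real.exp (l*b) - 1 - l*b) / b^2) := by
    have hrw : y^2 * ((Real.exp (l*b) - 1 - l*b) / b^2) = ((Real.exp (l*b) - 1 - l*b) * y^2) / b^2 := by
      ring
    rw [hrw, le_div_iff₀ hb2]
    nlinarith [hF]
  linarith

/-- `(e^z - 1 - z)(1 - z/3) ≤ z²/2` for `z ≥ 0`. -/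
lemma aux_bennett {z : ℝ} (hz : 0 ≤ z) :
    (Real.exp z - 1 - z) * (1 - z / 3) ≤ z ^ 2 / 2 := by
  set f := fun z : ℝ => z ^ 2 / 2 - (Real.exp z - 1 - z) * (1 - z / 3) with hf
  have hd1 : ∀ z : ℝ, HasDerivAt f
      (z - (Real.exp z - 1) * (1 - z/3) + (Real.exp z - 1 - z) / 3) z := by
    intro z
    have h1 : HasDerivAt (fun z : ℝ => z ^ 2 / 2) z z := by
      have := (hasDerivAt_pow 2 z).div_const 2
      exact this.congr_deriv (by ring)
    have h2 : HasDerivAt (fun z : ℝ => Real.exp z - 1 - z) (Real.exp z - 1) z :=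
      ((Real.hasDerivAt_exp z).sub_const 1).sub (hasDerivAt_id z)
    have h3 : HasDerivAt (fun z : ℝ => 1 - z / 3) (-(1/3)) z := by
      have := ((hasDerivAt_id z).div_const 3).const_sub 1
      exact this.congr_deriv (by norm_num)
    have h4 := h1.sub (h2.mul h3)
    exact h4.congr_deriv (by ring)
  have hd1' : ∀ z : ℝ, HasDerivAt (fun z => z - (Real.exp z - 1) * (1 - z/3) + (Real.exp z - 1 - z) / 3)
      ((1 + (z - 1) * Real.exp z) / 3) z := by
    intro z
    have h2 : HasDerivAt (fun z : ℝ => Real.exp z - 1) (Real.exp z) z :=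
      (Real.hasDerivAt_exp z).sub_const 1
    have h3 : HasDerivAt (fun z : ℝ => 1 - z / 3) (-(1/3)) z := by
      have := ((hasDerivAt_id z).div_const 3).const_sub 1
      exact this.congr_deriv (by norm_num)
    have h5 : HasDerivAt (fun z : ℝ => Real.exp z - 1 - z) (Real.exp z - 1) z :=
      ((Real.hasDerivAt_exp z).sub_const 1).sub (hasDerivAt_id z)
    have h4 := ((hasDerivAt_id z).sub (h2.mul h3)).add (h5.div_const 3)
    exact h4.congr_deriv (by ring)
  have hmono' : MonotoneOn (fun z => z - (Real.exp z - 1) * (1 - z/3) + (Real.exp z - 1 - z) / 3)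
      (Set.Ici 0) := by
    apply monotoneOn_of_deriv_nonneg (convex_Ici 0)
      (fun z _ => ((hd1' z).differentiableAt).differentiableWithinAt.continuousWithinAt)
      (fun z hz => ((hd1' z).differentiableAt).differentiableWithinAt)
    intro z hz
    rw [(hd1' z).deriv]
    have := aux_G0 z
    linarith
  have hder_nonneg : ∀ z : ℝ, 0 ≤ z → 0 ≤ z - (Real.exp z - 1) * (1 - z/3) + (Real.exp z - 1 - z) / 3 := by
    intro z hz
    have := hmono' (Set.mem_Ici.2 le_rfl) (Set.mem_Ici.2 hz) hz
    simpa using this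
  have hmono : MonotoneOn f (Set.Ici 0) := by
    apply monotoneOn_of_deriv_nonneg (convex_Ici 0)
      (fun z _ => ((hd1 z).differentiableAt).differentiableWithinAt.continuousWithinAt)
      (fun z hz => ((hd1 z).differentiableAt).differentiableWithinAt)
    intro z hz
    rw [interior_Ici] at hz
    rw [(hd1 z).deriv]
    exact hder_nonneg z (le_of_lt hz)
  have := hmono (Set.mem_Ici.2 le_rfl) (Set.mem_Ici.2 hz) hz
  simp only [hf, Real.exp_zero] at this
  norm_num at this
  linarith

end AuxAnalysis

section ChernoffSec
variable {X : Type*} [Fintype X] [DecidableEq X] [MeasurableSpace X] [MeasurableSingletonClass X]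



lemma pmf_sum_toReal (ρ : PMF X) : ∑ x, (ρ x).toReal = 1 := by
  have h1 : ∑ x, ρ x = 1 := by
    rw [← tsum_fintype (L := SummationFilter.unconditional X)]; exact ρ.tsum_coe
  have h2 : (∑ x, ρ x).toReal = ∑ x, (ρ x).toReal :=
    ENNReal.toReal_sum (fun x _ => ρ.apply_ne_top x)
  rw [h1] at h2; simpa using h2.symm

lemma pi_singleton (ρ : PMF X) {k : ℕ} (D : Fin k → X) :
    (Measure.pi fun _ : Fin k => ρ.toMeasure) {D} = ∏ i, ρ (D i) := by
  rw [← Set.univ_pi_singleton D, Measure.pi_pi]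
  exact Finset.prod_congr rfl fun i _ =>
    ρ.toMeasure_apply_singleton (D i) (measurableSet_singleton _)

/-- Finite Chernoff/Bernstein bound over a product of i.i.d. PMF samples. -/
lemma chernoff (ρ : PMF X) (h : X → ℝ) (b v t : ℝ) (hb : 0 < b) (hv : 0 < v) (ht : 0 < t)
    (hmean : ∑ x, (ρ x).toReal * h x = 0) (hbd : ∀ x, h x ≤ b)
    (hvar : ∑ x, (ρ x).toReal * h x ^ 2 ≤ v) (k : ℕ) :
    (Measure.pi fun _ : Fin k => ρ.toMeasure) {D | (k : ℝ) * t ≤ ∑ i, h (D i)} ≤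
      ENNReal.ofReal (Real.exp (-((k : ℝ) * (t ^ 2 / (2 * (v + b * t / 3)))))) := by
  classical
  set lam := t / (v + b * t / 3) with hlamdef
  have hd : 0 < v + b * t / 3 := by positivity
  have hlam : 0 < lam := div_pos ht hd
  set c := (Real.exp (lam * b) - 1 - lam * b) / b ^ 2 with hcdef
  have hc : 0 ≤ c := by
    have := Real.add_one_le_exp (lam * b)
    have hb2 : (0:ℝ) < b ^ 2 := by positivity
    apply div_nonneg (by linarith) hb2.le
  -- per point mgf bound
  set S := ∑ x, (ρ x).toReal * Real.exp (lam * h x) with hSdef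
  have hS0 : 0 ≤ S := Finset.sum_nonneg fun x _ => mul_nonneg ENNReal.toReal_nonneg (Real.exp_pos _).le
  have hSbound : S ≤ Real.exp (v * c) := by
    have hpt : ∀ x, Real.exp (lam * h x) ≤ 1 + lam * h x + h x ^ 2 * c :=
      fun x => aux_key_pointwise hb hlam (hbd x)
    have h1 : S ≤ ∑ x, (ρ x).toReal * (1 + lam * h x + h x ^ 2 * c) := by
      apply Finset.sum_le_sum
      intro x _
      exact mul_le_mul_of_nonneg_left (hpt x) ENNReal.toReal_nonneg
    have h2 : ∑ x, (ρ x).toReal * (1 + lam * h x + h x ^ 2 * c)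
        = (∑ x, (ρ x).toReal) + lam * (∑ x, (ρ x).toReal * h x)
          + c * (∑ x, (ρ x).toReal * h x ^ 2) := by
      rw [Finset.mul_sum, Finset.mul_sum, ← Finset.sum_add_distrib, ← Finset.sum_add_distrib]
      exact Finset.sum_congr rfl fun x _ => by ring
    have h3 : ∑ x, (ρ x).toReal * (1 + lam * h x + h x ^ 2 * c) ≤ 1 + c * v := by
      rw [h2, pmf_sum_toReal ρ, hmean]
      have := mul_le_mul_of_nonneg_left hvar hc
      linarith
    have h4 : (1 : ℝ) + c * v ≤ Real.exp (v * c) := by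
      have := Real.add_one_le_exp (v * c)
      linarith [this]
    linarith
  -- Chernoff bound via finite sums in ℝ≥0∞
  set P := (Measure.pi fun _ : Fin k => ρ.toMeasure) with hP
  set s : Set (Fin k → X) := {D | (k : ℝ) * t ≤ ∑ i, h (D i)} with hs
  have key : P s ≤ ENNReal.ofReal (Real.exp (-(lam * ((k:ℝ) * t)))) * ENNReal.ofReal S ^ k := by
    have hsub : s ⊆ ⋃ D ∈ Finset.univ.filter (· ∈ s), ({D} : Set (Fin k → X)) := by
      intro D hD
      simp only [Set.mem_iUnion]
      exact ⟨D, by simpa using hD, rfl⟩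
    calc P s ≤ ∑ D ∈ Finset.univ.filter (· ∈ s), P {D} :=
          le_trans (measure_mono hsub) (measure_biUnion_finset_le _ _)
      _ ≤ ∑ D ∈ Finset.univ.filter (· ∈ s),
            ENNReal.ofReal (Real.exp (lam * ((∑ i, h (D i)) - (k:ℝ) * t))) * ∏ i, ρ (D i) := by
          apply Finset.sum_le_sum
          intro D hD
          rw [pi_singleton ρ D]
          have hDs : (k : ℝ) * t ≤ ∑ i, h (D i) := (Finset.mem_filter.1 hD).2
          have h1 : (1 : ℝ≥0∞) ≤ ENNReal.ofReal (Real.exp (lam * ((∑ i, h (D i)) - (k:ℝ) * t))) := by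
            rw [show (1 : ℝ≥0∞) = ENNReal.ofReal 1 by simp]
            apply ENNReal.ofReal_le_ofReal
            rw [← Real.exp_zero]
            apply Real.exp_le_exp.2
            have : (0:ℝ) ≤ (∑ i, h (D i)) - (k:ℝ) * t := by linarith
            positivity
          calc ∏ i, ρ (D i) = 1 * ∏ i, ρ (D i) := (one_mul _).symm
            _ ≤ _ := by gcongr
      _ ≤ ∑ D : (Fin k → X),
            ENNReal.ofReal (Real.exp (lam * ((∑ i, h (D i)) - (k:ℝ) * t))) * ∏ i, ρ (D i) :=
          Finset.sum_le_sum_of_subset (Finset.filter_subset _ _)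
      _ = ENNReal.ofReal (Real.exp (-(lam * ((k:ℝ) * t)))) *
            ∑ D : (Fin k → X), ∏ i, (ρ (D i) * ENNReal.ofReal (Real.exp (lam * h (D i)))) := by
          rw [Finset.mul_sum]
          apply Finset.sum_congr rfl
          intro D _
          rw [Finset.prod_mul_distrib]
          have hexp : Real.exp (lam * ((∑ i, h (D i)) - (k:ℝ) * t))
              = Real.exp (-(lam * ((k:ℝ) * t))) * ∏ i, Real.exp (lam * h (D i)) := by
            rw [← Real.exp_sum, ← Real.exp_add]
            rw [← Finset.mul_sum]
            ring
          rw [hexp, ENNReal.ofReal_mul (Real.exp_pos _).le]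
          rw [ENNReal.ofReal_prod_of_nonneg (fun i _ => (Real.exp_pos _).le)]
          ring
      _ = ENNReal.ofReal (Real.exp (-(lam * ((k:ℝ) * t)))) *
            (∑ x, ρ x * ENNReal.ofReal (Real.exp (lam * h x))) ^ k := by
          congr 1
          have hps := Finset.prod_univ_sum (fun _ : Fin k => (Finset.univ : Finset X))
            (fun _ x => ρ x * ENNReal.ofReal (Real.exp (lam * h x)))
          rw [Fintype.piFinset_univ] at hps
          rw [← hps, Finset.prod_const, Finset.card_univ, Fintype.card_fin]
      _ = ENNReal.ofReal (Real.exp (-(lam * ((k:ℝ) * t)))) * ENNReal.ofReal S ^ k := by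
          congr 2
          rw [hSdef, ENNReal.ofReal_sum_of_nonneg
            (fun x _ => mul_nonneg ENNReal.toReal_nonneg (Real.exp_pos _).le)]
          apply Finset.sum_congr rfl
          intro x _
          rw [ENNReal.ofReal_mul ENNReal.toReal_nonneg, ENNReal.ofReal_toReal (ρ.apply_ne_top x)]
  -- combine
  have hfin : ENNReal.ofReal (Real.exp (-(lam * ((k:ℝ) * t)))) * ENNReal.ofReal S ^ k ≤
      ENNReal.ofReal (Real.exp (-((k : ℝ) * (t ^ 2 / (2 * (v + b * t / 3)))))) := by
    rw [← ENNReal.ofReal_pow hS0, ← ENNReal.ofReal_mul (Real.exp_pos _).le]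
    apply ENNReal.ofReal_le_ofReal
    have h5 : S ^ k ≤ Real.exp (v * c) ^ k := pow_le_pow_left₀ hS0 hSbound k
    have h6 : Real.exp (-(lam * ((k:ℝ) * t))) * S ^ k ≤
        Real.exp (-(lam * ((k:ℝ) * t))) * Real.exp (v * c) ^ k :=
      mul_le_mul_of_nonneg_left h5 (Real.exp_pos _).le
    rw [← Real.exp_nat_mul, ← Real.exp_add] at h6
    apply le_trans h6
    apply Real.exp_le_exp.2
    -- arithmetic : -(lam k t) + k v c ≤ -(k t²/(2(v+bt/3)))
    have hcb : c ≤ lam ^ 2 / (2 * (1 - lam * b / 3)) := by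
      have hz : (0:ℝ) ≤ lam * b := by positivity
      have hben := aux_bennett hz
      have h1mlb : 1 - lam * b / 3 = v / (v + b * t / 3) := by
        rw [hlamdef]
        field_simp
        ring
      have hpos : (0:ℝ) < 1 - lam * b / 3 := by
        rw [h1mlb]; positivity
      rw [hcdef, div_le_div_iff₀ (by positivity) (by positivity)]
      calc (Real.exp (lam * b) - 1 - lam * b) * (2 * (1 - lam * b / 3))
          = 2 * ((Real.exp (lam * b) - 1 - lam * b) * (1 - lam * b / 3)) := by ring
        _ ≤ 2 * ((lam * b) ^ 2 / 2) := by linarith [aux_bennett hz]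
        _ = lam ^ 2 * b ^ 2 := by ring
    have hvc : v * c ≤ lam * t / 2 := by
      have h1mlb : 1 - lam * b / 3 = v / (v + b * t / 3) := by
        rw [hlamdef]
        field_simp
        ring
      have hpos : (0:ℝ) < 1 - lam * b / 3 := by
        rw [h1mlb]; positivity
      have h7 : lam ^ 2 / (2 * (1 - lam * b / 3)) = lam ^ 2 * (v + b * t / 3) / (2 * v) := by
        rw [h1mlb]
        field_simp
      have h8 : v * c ≤ v * (lam ^ 2 * (v + b * t / 3) / (2 * v)) := by
        apply mul_le_mul_of_nonneg_left _ hv.le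
        rw [← h7]; exact hcb
      have h9 : v * (lam ^ 2 * (v + b * t / 3) / (2 * v)) = lam * (lam * (v + b * t / 3)) / 2 := by
        field_simp
      have h10 : lam * (v + b * t / 3) = t := by
        rw [hlamdef]
        field_simp
      rw [h9, h10] at h8
      exact h8
    have h11 : lam * t / 2 = t ^ 2 / (2 * (v + b * t / 3)) := by
      rw [hlamdef]
      field_simp
    have hk0 : (0:ℝ) ≤ (k:ℝ) := Nat.cast_nonneg k
    calc -(lam * ((k:ℝ) * t)) + (k:ℝ) * (v * c)
        ≤ -(lam * ((k:ℝ) * t)) + (k:ℝ) * (lam * t / 2) := by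
          have := mul_le_mul_of_nonneg_left hvc hk0
          linarith
      _ = -((k:ℝ) * (lam * t / 2)) := by ring
      _ = -((k:ℝ) * (t ^ 2 / (2 * (v + b * t / 3)))) := by rw [h11]
  exact le_trans key hfin




lemma chernoff_abs (ρ : PMF X) (h : X → ℝ) (b v t : ℝ) (hb : 0 < b) (hv : 0 < v) (ht : 0 < t)
    (hmean : ∑ x, (ρ x).toReal * h x = 0) (hbd : ∀ x, |h x| ≤ b)
    (hvar : ∑ x, (ρ x).toReal * h x ^ 2 ≤ v) (k : ℕ) :
    (Measure.pi fun _ : Fin k => ρ.toMeasure) {D | (k : ℝ) * t < |∑ i, h (D i)|} ≤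
      2 * ENNReal.ofReal (Real.exp (-((k : ℝ) * (t ^ 2 / (2 * (v + b * t / 3)))))) := by
  have hsub : {D : Fin k → X | (k : ℝ) * t < |∑ i, h (D i)|} ⊆
      {D : Fin k → X | (k : ℝ) * t ≤ ∑ i, h (D i)} ∪
      {D : Fin k → X | (k : ℝ) * t ≤ ∑ i, (fun x => -h x) (D i)} := by
    intro D hD
    simp only [Set.mem_setOf_eq] at hD
    rcases abs_cases (∑ i, h (D i)) with ⟨he, _⟩ | ⟨he, _⟩
    · left
      exact le_of_lt (he ▸ hD)
    · right
      simp only [Set.mem_setOf_eq, Finset.sum_neg_distrib]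
      rw [he] at hD
      exact le_of_lt hD
  calc (Measure.pi fun _ : Fin k => ρ.toMeasure) {D | (k : ℝ) * t < |∑ i, h (D i)|}
      ≤ (Measure.pi fun _ : Fin k => ρ.toMeasure) ({D : Fin k → X | (k : ℝ) * t ≤ ∑ i, h (D i)} ∪
        {D : Fin k → X | (k : ℝ) * t ≤ ∑ i, (fun x => -h x) (D i)}) := measure_mono hsub
    _ ≤ (Measure.pi fun _ : Fin k => ρ.toMeasure) {D : Fin k → X | (k : ℝ) * t ≤ ∑ i, h (D i)} +
        (Measure.pi fun _ : Fin k => ρ.toMeasure)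
          {D : Fin k → X | (k : ℝ) * t ≤ ∑ i, (fun x => -h x) (D i)} := measure_union_le _ _
    _ ≤ ENNReal.ofReal (Real.exp (-((k : ℝ) * (t ^ 2 / (2 * (v + b * t / 3)))))) +
        ENNReal.ofReal (Real.exp (-((k : ℝ) * (t ^ 2 / (2 * (v + b * t / 3)))))) := by
        gcongr
        · exact chernoff ρ h b v t hb hv ht hmean (fun x => (abs_le.1 (hbd x)).2) hvar k
        · apply chernoff ρ (fun x => -h x) b v t hb hv ht
          · simp only [mul_neg, Finset.sum_neg_distrib, hmean, neg_zero]
          · intro x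
            have := (abs_le.1 (hbd x)).1
            linarith
          · simpa using hvar
    _ = 2 * ENNReal.ofReal (Real.exp (-((k : ℝ) * (t ^ 2 / (2 * (v + b * t / 3)))))) :=
        (two_mul _).symm


end ChernoffSec


section Facts
variable {X : Type*} [Fintype X] [DecidableEq X]

lemma pmf_sum_toReal' (ρ : PMF X) : ∑ x, (ρ x).toReal = 1 := by
  have h1 : ∑ x, ρ x = 1 := by
    rw [← tsum_fintype (L := SummationFilter.unconditional X)]; exact ρ.tsum_coe
  have h2 : (∑ x, ρ x).toReal = ∑ x, (ρ x).toReal :=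
    ENNReal.toReal_sum (fun x _ => ρ.apply_ne_top x)
  rw [h1] at h2; simpa using h2.symm

lemma pmf_toReal_pos {ρ : PMF X} {x : X} (hx : ρ x ≠ 0) : 0 < (ρ x).toReal :=
  ENNReal.toReal_pos hx (ρ.apply_ne_top x)

lemma pmf_toReal_eq_zero {ρ : PMF X} {x : X} (hx : ρ x = 0) : (ρ x).toReal = 0 := by
  simp [hx]

variable (μ ν : PMF X)

/-- sum of μ over support of ν equals 1 -/
lemma sum_mu_support (habs : ∀ x, μ x ≠ 0 → ν x ≠ 0) : ∑ x ∈ Finset.univ.filter (fun x => ν x ≠ 0), (μ x).toReal = 1 := by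
  rw [← pmf_sum_toReal' μ]
  apply Finset.sum_subset (Finset.filter_subset _ _)
  intro x _ hx
  simp only [Finset.mem_filter, Finset.mem_univ, true_and, not_not] at hx
  have : μ x = 0 := by
    by_contra hμ
    exact (habs x hμ) hx
  simp [this]

lemma wfn_nonneg (x : X) : 0 ≤ wfn μ ν x :=
  div_nonneg ENNReal.toReal_nonneg ENNReal.toReal_nonneg

lemma wfn_le (x : X) (hx : ν x ≠ 0) : wfn μ ν x ≤ expDinf μ ν := by
  apply le_csSup
  · exact (Set.Finite.image _ (Set.toFinite _)).bddAbove
  · exact ⟨x, hx, rfl⟩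

lemma one_le_expDinf (habs : ∀ x, μ x ≠ 0 → ν x ≠ 0) : 1 ≤ expDinf μ ν := by
  have h1 : ∀ x ∈ Finset.univ.filter (fun x => ν x ≠ 0),
      (μ x).toReal ≤ expDinf μ ν * (ν x).toReal := by
    intro x hx
    simp only [Finset.mem_filter, Finset.mem_univ, true_and] at hx
    have hpos := pmf_toReal_pos (ρ := ν) hx
    have := wfn_le μ ν x hx
    rw [wfn, div_le_iff₀ hpos] at this
    linarith
  have h2 : (1:ℝ) = ∑ x ∈ Finset.univ.filter (fun x => ν x ≠ 0), (μ x).toReal :=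
    (sum_mu_support μ ν habs).symm
  have h3 : ∑ x ∈ Finset.univ.filter (fun x => ν x ≠ 0), (μ x).toReal ≤
      ∑ x ∈ Finset.univ.filter (fun x => ν x ≠ 0), expDinf μ ν * (ν x).toReal :=
    Finset.sum_le_sum h1
  have h4 : ∑ x ∈ Finset.univ.filter (fun x => ν x ≠ 0), expDinf μ ν * (ν x).toReal
      = expDinf μ ν * ∑ x ∈ Finset.univ.filter (fun x => ν x ≠ 0), (ν x).toReal := by
    rw [Finset.mul_sum]
  have h5 : ∑ x ∈ Finset.univ.filter (fun x => ν x ≠ 0), (ν x).toReal = 1 := by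
    rw [← pmf_sum_toReal' ν]
    apply Finset.sum_subset (Finset.filter_subset _ _)
    intro x _ hx
    simp only [Finset.mem_filter, Finset.mem_univ, true_and, not_not] at hx
    simp [hx]
  rw [h4, h5, mul_one] at h3
  linarith [h2 ▸ h3]

lemma wfn_le_all (habs : ∀ x, μ x ≠ 0 → ν x ≠ 0) (x : X) : wfn μ ν x ≤ expDinf μ ν := by
  by_cases hx : ν x = 0
  · rw [wfn, hx]
    simp only [ENNReal.toReal_zero, div_zero]
    linarith [one_le_expDinf μ ν habs]
  · exact wfn_le μ ν x hx

lemma one_le_expD2 (habs : ∀ x, μ x ≠ 0 → ν x ≠ 0) : 1 ≤ expD2 μ ν := by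
  set s := Finset.univ.filter (fun x : X => ν x ≠ 0) with hs
  have hcs := Finset.sum_mul_sq_le_sq_mul_sq s (fun x => (μ x).toReal / Real.sqrt ((ν x).toReal))
    (fun x => Real.sqrt ((ν x).toReal))
  have h1 : ∀ x ∈ s, (μ x).toReal / Real.sqrt ((ν x).toReal) * Real.sqrt ((ν x).toReal)
      = (μ x).toReal := by
    intro x hx
    simp only [hs, Finset.mem_filter, Finset.mem_univ, true_and] at hx
    have hpos := pmf_toReal_pos (ρ := ν) hx
    field_simp
  have h2 : ∀ x ∈ s, ((μ x).toReal / Real.sqrt ((ν x).toReal)) ^ 2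
      = (μ x).toReal ^ 2 / (ν x).toReal := by
    intro x hx
    simp only [hs, Finset.mem_filter, Finset.mem_univ, true_and] at hx
    have hpos := pmf_toReal_pos (ρ := ν) hx
    rw [div_pow, Real.sq_sqrt (le_of_lt hpos)]
  have h3 : ∀ x ∈ s, (Real.sqrt ((ν x).toReal)) ^ 2 = (ν x).toReal := by
    intro x hx
    simp only [hs, Finset.mem_filter, Finset.mem_univ, true_and] at hx
    exact Real.sq_sqrt (le_of_lt (pmf_toReal_pos hx))
  rw [Finset.sum_congr rfl h1, Finset.sum_congr rfl h2, Finset.sum_congr rfl h3] at hcs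
  have h5 : ∑ x ∈ s, (ν x).toReal = 1 := by
    rw [← pmf_sum_toReal' ν]
    apply Finset.sum_subset (Finset.filter_subset _ _)
    intro x _ hx
    simp only [hs, Finset.mem_filter, Finset.mem_univ, true_and, not_not] at hx
    simp [hx]
  rw [sum_mu_support μ ν habs, h5, mul_one] at hcs
  simpa [expD2] using hcs

/-- mean of `w·φ` under `ν` equals mean of `φ` under `μ`. -/
lemma mean_w_phi (habs : ∀ x, μ x ≠ 0 → ν x ≠ 0) (φ : X → ℝ) :
    ∑ x, (ν x).toReal * (wfn μ ν x * φ x) = ∑ x, (μ x).toReal * φ x := by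
  apply Finset.sum_congr rfl
  intro x _
  by_cases hx : ν x = 0
  · have hμ : μ x = 0 := by
      by_contra hμ
      exact (habs x hμ) hx
    simp [hx, hμ]
  · have hpos := pmf_toReal_pos (ρ := ν) hx
    rw [wfn]
    field_simp

/-- second moment of `w·φ` under `ν` is at most `expD2`, for `0 ≤ φ ≤ 1`. -/
lemma second_moment_w_phi (φ : X → ℝ) (hr : ∀ x, φ x ∈ Set.Icc (0:ℝ) 1) :
    ∑ x, (ν x).toReal * (wfn μ ν x * φ x) ^ 2 ≤ expD2 μ ν := by
  have h1 : ∀ x, (ν x).toReal * (wfn μ ν x * φ x) ^ 2 ≤ (ν x).toReal * (wfn μ ν x) ^ 2 := by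
    intro x
    apply mul_le_mul_of_nonneg_left _ ENNReal.toReal_nonneg
    rw [mul_pow]
    have h2 : (φ x) ^ 2 ≤ 1 := by
      rcases hr x with ⟨h0, h1⟩
      nlinarith
    nlinarith [sq_nonneg (wfn μ ν x)]
  refine le_trans (Finset.sum_le_sum fun x _ => h1 x) ?_
  have hsplit : ∑ x, (ν x).toReal * (wfn μ ν x)^2
      = ∑ x ∈ Finset.univ.filter (fun x => ν x ≠ 0), (ν x).toReal * (wfn μ ν x)^2 := by
    symm
    apply Finset.sum_subset (Finset.filter_subset _ _)
    intro x _ hx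
    simp only [Finset.mem_filter, Finset.mem_univ, true_and, not_not] at hx
    simp [hx]
  rw [hsplit, expD2]
  apply Finset.sum_le_sum
  intro x hx
  simp only [Finset.mem_filter, Finset.mem_univ, true_and] at hx
  have hpos := pmf_toReal_pos (ρ := ν) hx
  rw [wfn, div_pow]
  rw [mul_div_assoc']
  apply le_of_eq
  field_simp

/-- centered second moment identity. -/
lemma centered_second_moment (ρ : PMF X) (f : X → ℝ) :
    ∑ x, (ρ x).toReal * (f x - ∑ y, (ρ y).toReal * f y) ^ 2
      = (∑ x, (ρ x).toReal * f x ^ 2) - (∑ y, (ρ y).toReal * f y) ^ 2 := by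
  set p := ∑ y, (ρ y).toReal * f y with hp
  have h1 : ∀ x, (ρ x).toReal * (f x - p) ^ 2
      = (ρ x).toReal * f x ^ 2 - 2 * p * ((ρ x).toReal * f x) + p ^ 2 * (ρ x).toReal := by
    intro x; ring
  rw [Finset.sum_congr rfl fun x _ => h1 x]
  rw [Finset.sum_add_distrib, Finset.sum_sub_distrib, ← Finset.mul_sum, ← Finset.mul_sum,
    pmf_sum_toReal' ρ]
  rw [← hp]
  ring

end Facts


lemma bestMixErr_nonneg_mem {X : Type*} {n : ℕ} (D : Fin n → X) (Q : Finset (X → ℝ))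
    (S : Finset X) :
    BddBelow {e : ℝ | ∃ μ : X → ℝ, (∀ x, 0 ≤ μ x) ∧ (∑ x ∈ S, μ x) = 1 ∧ e = mixErr D Q S μ} := by
  refine ⟨0, fun e he => ?_⟩
  obtain ⟨θ, _, _, rfl⟩ := he
  exact Real.sSup_nonneg (by rintro y ⟨φ, _, rfl⟩; exact abs_nonneg _)

/-- Deterministic part: the concentration events imply small best mixture error. -/
lemma det_lemma {X : Type*} [Fintype X] [DecidableEq X]
    (μ ν : PMF X) (Q : Finset (X → ℝ)) (hQ : Q.Nonempty)
    (hrange : ∀ φ ∈ Q, ∀ x, φ x ∈ Set.Icc (0:ℝ) 1)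
    {n m : ℕ} (hn : 0 < n) (hm : 0 < m) {α : ℝ} (hα : 0 < α) (hα1 : α ≤ 1)
    (hμ1 : ∑ x, (μ x).toReal = 1)
    (D : Fin n → X) (Y : Fin m → X)
    (H1 : ∀ φ ∈ Q, |(∑ i, φ (D i)) - n * (∑ x, (μ x).toReal * φ x)| ≤ n * (α/3))
    (H2 : ∀ φ ∈ Q, |(∑ j, wfn μ ν (Y j) * φ (Y j)) - m * (∑ x, (μ x).toReal * φ x)| ≤ m * (α/4))
    (H3 : |(∑ j, wfn μ ν (Y j)) - m| ≤ m * (α/4)) :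
    bestMixErr D Q (Finset.univ.image Y) ≤ α := by
  classical
  set S := Finset.univ.image Y with hS
  set W := ∑ j, wfn μ ν (Y j) with hW
  have hmR : (0:ℝ) < m := by exact_mod_cast hm
  have hnR : (0:ℝ) < n := by exact_mod_cast hn
  have hwnn : ∀ x, 0 ≤ wfn μ ν x := fun x => div_nonneg ENNReal.toReal_nonneg ENNReal.toReal_nonneg
  have hWlb : 3 * (m:ℝ) / 4 ≤ W := by
    have h := (abs_le.1 H3).1
    nlinarith
  have hWpos : 0 < W := by nlinarith
  set θ : X → ℝ := fun x => (∑ j, if Y j = x then wfn μ ν x else 0) / W with hθ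
  have hθnn : ∀ x, 0 ≤ θ x := by
    intro x
    apply div_nonneg _ hWpos.le
    exact Finset.sum_nonneg fun j _ => by split <;> simp [hwnn x]
  have hswap : ∀ g : X → ℝ, (∑ x ∈ S, (∑ j, if Y j = x then wfn μ ν x else 0) * g x)
      = ∑ j, wfn μ ν (Y j) * g (Y j) := by
    intro g
    have : ∀ x ∈ S, (∑ j, if Y j = x then wfn μ ν x else 0) * g x
        = ∑ j, if Y j = x then wfn μ ν x * g x else 0 := by
      intro x _
      rw [Finset.sum_mul]
      exact Finset.sum_congr rfl fun j _ => by split <;> simp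
    rw [Finset.sum_congr rfl this, Finset.sum_comm]
    apply Finset.sum_congr rfl
    intro j _
    rw [Finset.sum_ite_eq S (Y j) (fun x => wfn μ ν x * g x)]
    simp [hS, Finset.mem_image_of_mem Y (Finset.mem_univ j)]
  have hθsum : ∑ x ∈ S, θ x = 1 := by
    have h1 : ∑ x ∈ S, θ x = (∑ x ∈ S, (∑ j, if Y j = x then wfn μ ν x else 0) * 1) / W := by
      rw [Finset.sum_div]
      exact Finset.sum_congr rfl fun x _ => by rw [mul_one]
    rw [h1, hswap (fun _ => 1)]
    simp only [mul_one]
    exact div_self (ne_of_gt hWpos)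
  have hmix : ∀ φ ∈ Q, |qD φ D - ∑ x ∈ S, θ x * φ x| ≤ α := by
    intro φ hφ
    set p := ∑ x, (μ x).toReal * φ x with hp
    have hp0 : 0 ≤ p := Finset.sum_nonneg fun x _ =>
      mul_nonneg ENNReal.toReal_nonneg (hrange φ hφ x).1
    have hp1 : p ≤ 1 := by
      calc p ≤ ∑ x, (μ x).toReal := Finset.sum_le_sum fun x _ => by
              have := (hrange φ hφ x).2
              nlinarith [ENNReal.toReal_nonneg (a := μ x)]
        _ = 1 := hμ1
    set A := ∑ i, φ (D i) with hA
    set Z := ∑ j, wfn μ ν (Y j) * φ (Y j) with hZ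
    have hmixval : ∑ x ∈ S, θ x * φ x = Z / W := by
      rw [hθ]
      have : ∀ x ∈ S, (∑ j, if Y j = x then wfn μ ν x else 0) / W * φ x
          = (∑ j, if Y j = x then wfn μ ν x else 0) * φ x / W := by
        intro x _; ring
      rw [Finset.sum_congr rfl this, ← Finset.sum_div, hswap φ]
    rw [hmixval]
    have h1 := H1 φ hφ
    have h2 := H2 φ hφ
    have e1 : qD φ D - Z / W = (A - n*p)/n + (p*W - Z)/W := by
      rw [qD]
      field_simp
      ring
    have habs : |qD φ D - Z / W| ≤ |A - n*p|/n + |p*W - Z|/W := by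
      rw [e1]
      refine (abs_add_le _ _).trans ?_
      rw [abs_div, abs_div, abs_of_pos hnR, abs_of_pos hWpos]
    have hterm1 : |A - n*p|/n ≤ α/3 := by
      rw [div_le_iff₀ hnR]
      calc |A - n*p| ≤ n * (α/3) := h1
        _ = α/3 * n := by ring
    have hnum2 : |p*W - Z| ≤ m * (α/2) := by
      have e2 : p*W - Z = p*(W - m) + (m*p - Z) := by ring
      rw [e2]
      refine (abs_add_le _ _).trans ?_
      have b1 : |p*(W - m)| ≤ m * (α/4) := by
        rw [abs_mul, abs_of_nonneg hp0]
        calc p * |W - m| ≤ 1 * |W - m| := by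
              apply mul_le_mul_of_nonneg_right hp1 (abs_nonneg _)
          _ = |W - m| := one_mul _
          _ ≤ m * (α/4) := H3
      have b2 : |m*p - Z| ≤ m * (α/4) := by
        rw [abs_sub_comm]
        exact h2
      linarith
    have hterm2 : |p*W - Z|/W ≤ 2*α/3 := by
      calc |p*W - Z|/W ≤ (m * (α/2))/(3*(m:ℝ)/4) :=
            div_le_div₀ (by positivity) hnum2 (by positivity) hWlb
        _ = 2*α/3 := by field_simp; ring
    linarith
  -- conclude
  have hmixerr : mixErr D Q S θ ≤ α := by
    apply Real.sSup_le
    · rintro y ⟨φ, hφ, rfl⟩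
      exact hmix φ hφ
    · linarith
  exact csInf_le_of_le (bestMixErr_nonneg_mem D Q S) ⟨θ, hθnn, hθsum, rfl⟩ hmixerr


lemma bestMixErr_le_one {X : Type*} [DecidableEq X] {n : ℕ} (hn : 0 < n)
    (D : Fin n → X) (Q : Finset (X → ℝ)) (hQ : Q.Nonempty)
    (hrange : ∀ φ ∈ Q, ∀ x, φ x ∈ Set.Icc (0:ℝ) 1)
    (S : Finset X) (hS : S.Nonempty) :
    bestMixErr D Q S ≤ 1 := by
  classical
  obtain ⟨x₀, hx₀⟩ := hS
  set θ : X → ℝ := fun x => if x = x₀ then 1 else 0 with hθ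
  have hθnn : ∀ x, 0 ≤ θ x := fun x => by rw [hθ]; dsimp only; split <;> norm_num
  have hθsum : ∑ x ∈ S, θ x = 1 := by
    rw [hθ, Finset.sum_ite_eq' S x₀ (fun _ => (1:ℝ))]
    simp [hx₀]
  have hnR : (0:ℝ) < n := by exact_mod_cast hn
  have hmix : mixErr D Q S θ ≤ 1 := by
    apply Real.sSup_le
    · rintro y ⟨φ, hφ, rfl⟩
      have hq0 : 0 ≤ qD φ D := by
        rw [qD]
        apply div_nonneg _ hnR.le
        exact Finset.sum_nonneg fun i _ => (hrange φ hφ (D i)).1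
      have hq1 : qD φ D ≤ 1 := by
        rw [qD, div_le_one hnR]
        calc ∑ i, φ (D i) ≤ ∑ _i : Fin n, (1:ℝ) :=
              Finset.sum_le_sum fun i _ => (hrange φ hφ (D i)).2
          _ = n := by simp
      have hv : ∑ x ∈ S, θ x * φ x = φ x₀ := by
        rw [hθ]
        have : ∀ x ∈ S, (if x = x₀ then (1:ℝ) else 0) * φ x
            = if x = x₀ then φ x else 0 := by
          intro x _; split <;> simp
        rw [Finset.sum_congr rfl this, Finset.sum_ite_eq' S x₀ φ]
        simp [hx₀]
      dsimp only
      rw [hv, abs_le]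
      have := (hrange φ hφ x₀).1
      have := (hrange φ hφ x₀).2
      constructor <;> linarith
    · norm_num
  exact csInf_le_of_le (bestMixErr_nonneg_mem D Q S) ⟨θ, hθnn, hθsum, rfl⟩ hmix


section EV
variable {X : Type*} [Fintype X] [DecidableEq X] [MeasurableSpace X] [MeasurableSingletonClass X]

/-- Hoeffding-side event bound. -/
lemma hoeffding_event (μ : PMF X) (φ : X → ℝ) (hr : ∀ x, φ x ∈ Set.Icc (0:ℝ) 1)
    {α L : ℝ} (hα : 0 < α) (hα1 : α ≤ 1) (hL : 0 < L) (n : ℕ) (hn : 8/α^2 * L ≤ n) :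
    (Measure.pi fun _ : Fin n => μ.toMeasure)
      {D | (n:ℝ)*(α/3) < |∑ i, (φ (D i) - ∑ x, (μ x).toReal * φ x)|} ≤
      2 * ENNReal.ofReal (Real.exp (-L)) := by
  set p := ∑ x, (μ x).toReal * φ x with hp
  have hp0 : 0 ≤ p := Finset.sum_nonneg fun x _ =>
    mul_nonneg ENNReal.toReal_nonneg (hr x).1
  have hp1 : p ≤ 1 := by
    calc p ≤ ∑ x, (μ x).toReal := Finset.sum_le_sum fun x _ => by
            nlinarith [(hr x).2, ENNReal.toReal_nonneg (a := μ x)]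
      _ = 1 := pmf_sum_toReal' μ
  have hmean : ∑ x, (μ x).toReal * (φ x - p) = 0 := by
    have h1 : ∀ x : X, (μ x).toReal * (φ x - p) = (μ x).toReal * φ x - p * (μ x).toReal :=
      fun x => by ring
    rw [Finset.sum_congr rfl (fun x _ => h1 x), Finset.sum_sub_distrib, ← Finset.mul_sum,
      pmf_sum_toReal' μ, ← hp]
    ring
  have hbd : ∀ x, |φ x - p| ≤ 1 := by
    intro x
    rw [abs_le]
    constructor <;> nlinarith [(hr x).1, (hr x).2]
  have hvar : ∑ x, (μ x).toReal * (φ x - p) ^ 2 ≤ 1/4 := by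
    have h1 := centered_second_moment μ φ
    have h2 : ∑ x, (μ x).toReal * φ x ^ 2 ≤ p := by
      rw [hp]
      apply Finset.sum_le_sum
      intro x _
      apply mul_le_mul_of_nonneg_left _ ENNReal.toReal_nonneg
      nlinarith [(hr x).1, (hr x).2, mul_nonneg (hr x).1 (sub_nonneg.2 (hr x).2)]
    rw [← hp] at h1
    rw [h1]
    nlinarith [sq_nonneg (p - 1/2), h2]
  have hch := chernoff_abs μ (fun x => φ x - p) 1 (1/4) (α/3) one_pos (by norm_num)
    (by positivity) hmean hbd hvar n
  refine le_trans hch ?_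
  gcongr 2 * ENNReal.ofReal ?_
  apply Real.exp_le_exp.2
  rw [neg_le_neg_iff]
  -- L ≤ n * ((α/3)^2 / (2 * (1/4 + 1*(α/3)/3)))
  have hd : 0 < 2 * ((1:ℝ)/4 + 1*(α/3)/3) := by positivity
  have hkey : 8/α^2 * L * ((α/3)^2 / (2 * (1/4 + 1*(α/3)/3))) ≥ L := by
    rw [ge_iff_le, div_pow]
    have hrw : 8/α^2 * L * ((α^2/3^2) / (2 * (1/4 + 1*(α/3)/3))) = L * (16 / (9 + 4*α)) := by
      field_simp
      ring
    rw [hrw]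
    have h9 : 9 + 4*α ≤ 13 := by linarith
    have hpos : 0 < 9 + 4*α := by linarith
    have : (1:ℝ) ≤ 16 / (9 + 4*α) := by
      rw [le_div_iff₀ hpos]; linarith
    nlinarith
  calc L ≤ 8/α^2 * L * ((α/3)^2 / (2 * (1/4 + 1*(α/3)/3))) := hkey
    _ ≤ (n:ℝ) * ((α/3)^2 / (2 * (1/4 + 1*(α/3)/3))) := by
        apply mul_le_mul_of_nonneg_right hn (by positivity)

/-- Bernstein-side event bound. -/
lemma bernstein_event (μ ν : PMF X) (habs : ∀ x, μ x ≠ 0 → ν x ≠ 0)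
    (φ : X → ℝ) (hr : ∀ x, φ x ∈ Set.Icc (0:ℝ) 1)
    {α L : ℝ} (hα : 0 < α) (hα1 : α ≤ 1) (hL : 0 < L) (m : ℕ)
    (hm : (32/α^2 * expD2 μ ν + 8/(3*α) * expDinf μ ν) * L ≤ m) :
    (Measure.pi fun _ : Fin m => ν.toMeasure)
      {Y | (m:ℝ)*(α/4) < |∑ j, (wfn μ ν (Y j) * φ (Y j) - ∑ x, (μ x).toReal * φ x)|} ≤
      2 * ENNReal.ofReal (Real.exp (-L)) := by
  set b := expDinf μ ν with hbdef
  set v := expD2 μ ν with hvdef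
  have hb1 : 1 ≤ b := one_le_expDinf μ ν habs
  have hv1 : 1 ≤ v := one_le_expD2 μ ν habs
  have hb : (0:ℝ) < b := by linarith
  have hv : (0:ℝ) < v := by linarith
  set p := ∑ x, (μ x).toReal * φ x with hp
  have hp0 : 0 ≤ p := Finset.sum_nonneg fun x _ =>
    mul_nonneg ENNReal.toReal_nonneg (hr x).1
  have hp1 : p ≤ 1 := by
    calc p ≤ ∑ x, (μ x).toReal := Finset.sum_le_sum fun x _ => by
            nlinarith [(hr x).2, ENNReal.toReal_nonneg (a := μ x)]
      _ = 1 := pmf_sum_toReal' μ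
  have hmw := mean_w_phi μ ν habs φ
  have hmean : ∑ x, (ν x).toReal * (wfn μ ν x * φ x - p) = 0 := by
    have h1 : ∀ x : X, (ν x).toReal * (wfn μ ν x * φ x - p)
        = (ν x).toReal * (wfn μ ν x * φ x) - p * (ν x).toReal := fun x => by ring
    rw [Finset.sum_congr rfl (fun x _ => h1 x), Finset.sum_sub_distrib, ← Finset.mul_sum,
      pmf_sum_toReal' ν, hmw, ← hp]
    ring
  have hbd : ∀ x, |wfn μ ν x * φ x - p| ≤ b := by
    intro x
    have hw0 := wfn_nonneg μ ν x
    have hwb := wfn_le_all μ ν habs x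
    have hφ := hr x
    rw [abs_le]
    constructor
    · nlinarith [hφ.1, hφ.2]
    · nlinarith [hφ.1, hφ.2]
  have hvar : ∑ x, (ν x).toReal * (wfn μ ν x * φ x - p) ^ 2 ≤ v := by
    have h1 := centered_second_moment ν (fun x => wfn μ ν x * φ x)
    rw [hmw, ← hp] at h1
    rw [h1]
    have h2 := second_moment_w_phi μ ν φ hr
    rw [← hvdef] at h2
    nlinarith [sq_nonneg p]
  have hch := chernoff_abs ν (fun x => wfn μ ν x * φ x - p) b v (α/4) hb hv
    (by positivity) hmean hbd hvar m
  refine le_trans hch ?_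
  gcongr 2 * ENNReal.ofReal ?_
  apply Real.exp_le_exp.2
  rw [neg_le_neg_iff]
  have hd : 0 < 2 * (v + b*(α/4)/3) := by positivity
  have hkey : (32/α^2 * v + 8/(3*α) * b) * ((α/4)^2 / (2*(v + b*(α/4)/3))) = 1 := by
    field_simp
    ring
  calc L = ((32/α^2 * v + 8/(3*α) * b) * L) * ((α/4)^2 / (2*(v + b*(α/4)/3))) := by
        rw [show ((32/α^2 * v + 8/(3*α) * b) * L) * ((α/4)^2 / (2*(v + b*(α/4)/3)))
            = L * ((32/α^2 * v + 8/(3*α) * b) * ((α/4)^2 / (2*(v + b*(α/4)/3)))) by ring,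
          hkey, mul_one]
    _ ≤ (m:ℝ) * ((α/4)^2 / (2*(v + b*(α/4)/3))) := by
        apply mul_le_mul_of_nonneg_right _ (by positivity)
        calc (32/α^2 * v + 8/(3*α) * b) * L ≤ (m:ℝ) := hm
end EV

/-- If the private dataset `D̃ ∼ μⁿ` and the public dataset `D̂ ∼ νᵐ` are large enough, then
with probability at least `1 − β`, the best mixture error of the support of `D̂` for
approximating `D̃` over the query class `Q` is at most `α`. -/
theorem bestMixErr_small_whp {X : Type*} [Fintype X] [Nonempty X] [DecidableEq X]
    [MeasurableSpace X] [MeasurableSingletonClass X]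
    (μ ν : PMF X) (habs : ∀ x, μ x ≠ 0 → ν x ≠ 0)
    (Q : Finset (X → ℝ)) (hQ : Q.Nonempty)
    (hrange : ∀ φ ∈ Q, ∀ x, φ x ∈ Set.Icc (0 : ℝ) 1)
    (n m : ℕ) (α β : ℝ) (hα : 0 < α) (hβ : 0 < β)
    (hn : 8 / α ^ 2 * Real.log (4 * Q.card / β) ≤ n)
    (hm : (32 / α ^ 2 * expD2 μ ν + 8 / (3 * α) * expDinf μ ν) *
        Real.log ((4 * Q.card + 4) / β) ≤ m) :
    ENNReal.ofReal (1 - β) ≤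
      ((Measure.pi fun _ : Fin n => μ.toMeasure).prod
          (Measure.pi fun _ : Fin m => ν.toMeasure))
        {p : (Fin n → X) × (Fin m → X) |
          bestMixErr p.1 Q (Finset.univ.image p.2) ≤ α} := by
  classical
  by_cases hβ1 : 1 ≤ β
  · have : ENNReal.ofReal (1 - β) = 0 := by
      rw [ENNReal.ofReal_eq_zero]; linarith
    rw [this]; exact zero_le
  push_neg at hβ1
  have hc1 : 1 ≤ Q.card := hQ.card_pos
  have hcR : (1:ℝ) ≤ Q.card := by exact_mod_cast hc1
  set L1 := Real.log (4 * Q.card / β) with hL1def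
  set L2 := Real.log ((4 * Q.card + 4) / β) with hL2def
  have hL1 : 0 < L1 := by
    apply Real.log_pos
    rw [lt_div_iff₀ hβ]
    nlinarith
  have hL2 : 0 < L2 := by
    apply Real.log_pos
    rw [lt_div_iff₀ hβ]
    nlinarith
  have hb1 : 1 ≤ expDinf μ ν := one_le_expDinf μ ν habs
  have hv1 : 1 ≤ expD2 μ ν := one_le_expD2 μ ν habs
  have hnR : (0:ℝ) < n := by
    have : (0:ℝ) < 8/α^2 * L1 := by positivity
    linarith
  have hn0 : 0 < n := by exact_mod_cast Nat.cast_pos.1 hnR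
  have hmR : (0:ℝ) < m := by
    have h1 : (0:ℝ) < (32/α^2 * expD2 μ ν + 8/(3*α) * expDinf μ ν) * L2 := by
      have : (0:ℝ) < 32/α^2 * expD2 μ ν := by positivity
      have : (0:ℝ) < 8/(3*α) * expDinf μ ν := by positivity
      nlinarith
    linarith
  have hm0 : 0 < m := by exact_mod_cast Nat.cast_pos.1 hmR
  set P := ((Measure.pi fun _ : Fin n => μ.toMeasure).prod
      (Measure.pi fun _ : Fin m => ν.toMeasure)) with hP
  haveI : IsProbabilityMeasure P := by
    rw [hP]; infer_instance
  set Ev := {p : (Fin n → X) × (Fin m → X) |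
      bestMixErr p.1 Q (Finset.univ.image p.2) ≤ α} with hEv
  by_cases hα1 : α ≤ 1
  · -- main case
    set pm : (X → ℝ) → ℝ := fun φ => ∑ x, (μ x).toReal * φ x with hpm
    set B1 : Set (Fin n → X) :=
      ⋃ φ ∈ Q, {D | (n:ℝ)*(α/3) < |∑ i, (φ (D i) - pm φ)|} with hB1def
    set Q' : Finset (X → ℝ) := insert (fun _ : X => (1:ℝ)) Q with hQ'def
    set B2 : Set (Fin m → X) :=
      ⋃ φ ∈ Q', {Y | (m:ℝ)*(α/4) < |∑ j, (wfn μ ν (Y j) * φ (Y j) - pm φ)|} with hB2def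
    have hrange' : ∀ φ ∈ Q', ∀ x, φ x ∈ Set.Icc (0:ℝ) 1 := by
      intro φ hφ x
      rw [hQ'def, Finset.mem_insert] at hφ
      rcases hφ with rfl | hφ
      · exact ⟨zero_le_one, le_refl 1⟩
      · exact hrange φ hφ x
    have hPB1 : (Measure.pi fun _ : Fin n => μ.toMeasure) B1 ≤ ENNReal.ofReal (β/2) := by
      refine le_trans (measure_biUnion_finset_le Q _) ?_
      have hexp : Real.exp (-L1) = β / (4 * Q.card) := by
        rw [hL1def, Real.exp_neg, Real.exp_log (by positivity), inv_div]
      have hone : ∀ φ ∈ Q,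
          (Measure.pi fun _ : Fin n => μ.toMeasure)
            {D | (n:ℝ)*(α/3) < |∑ i, (φ (D i) - pm φ)|} ≤
          2 * ENNReal.ofReal (β / (4 * Q.card)) := by
        intro φ hφ
        have := hoeffding_event μ φ (hrange φ hφ) hα hα1 hL1 n hn
        rwa [hexp] at this
      refine le_trans (Finset.sum_le_sum hone) ?_
      rw [Finset.sum_const, nsmul_eq_mul]
      have h2 : (2:ℝ≥0∞) * ENNReal.ofReal (β / (4 * Q.card))
          = ENNReal.ofReal (2 * (β / (4 * Q.card))) := by
        rw [ENNReal.ofReal_mul (by norm_num)]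
        norm_num
      rw [h2]
      rw [show ((Q.card : ℝ≥0∞)) = ENNReal.ofReal ((Q.card : ℝ)) by
        rw [ENNReal.ofReal_natCast]]
      rw [← ENNReal.ofReal_mul (by positivity)]
      apply ENNReal.ofReal_le_ofReal
      have hcpos : (0:ℝ) < Q.card := by linarith
      apply le_of_eq
      field_simp
      ring
    have hPB2 : (Measure.pi fun _ : Fin m => ν.toMeasure) B2 ≤ ENNReal.ofReal (β/2) := by
      refine le_trans (measure_biUnion_finset_le Q' _) ?_
      have hexp : Real.exp (-L2) = β / (4 * Q.card + 4) := by
        rw [hL2def, Real.exp_neg, Real.exp_log (by positivity), inv_div]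
      have hone : ∀ φ ∈ Q',
          (Measure.pi fun _ : Fin m => ν.toMeasure)
            {Y | (m:ℝ)*(α/4) < |∑ j, (wfn μ ν (Y j) * φ (Y j) - pm φ)|} ≤
          2 * ENNReal.ofReal (β / (4 * Q.card + 4)) := by
        intro φ hφ
        have := bernstein_event μ ν habs φ (hrange' φ hφ) hα hα1 hL2 m hm
        rwa [hexp] at this
      refine le_trans (Finset.sum_le_sum hone) ?_
      rw [Finset.sum_const, nsmul_eq_mul]
      have hcard : (Q'.card : ℝ≥0∞) ≤ ((Q.card + 1 : ℕ) : ℝ≥0∞) := by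
        apply Nat.cast_le.2
        rw [hQ'def]
        exact le_trans (Finset.card_insert_le _ _) (by omega)
      refine le_trans (mul_le_mul_of_nonneg_right hcard zero_le) ?_
      have h2 : (2:ℝ≥0∞) * ENNReal.ofReal (β / (4 * Q.card + 4))
          = ENNReal.ofReal (2 * (β / (4 * Q.card + 4))) := by
        rw [ENNReal.ofReal_mul (by norm_num)]
        norm_num
      rw [h2]
      rw [show (((Q.card + 1 : ℕ)) : ℝ≥0∞) = ENNReal.ofReal (((Q.card:ℝ) + 1)) by
        rw [← ENNReal.ofReal_natCast]; norm_num]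
      rw [← ENNReal.ofReal_mul (by positivity)]
      apply ENNReal.ofReal_le_ofReal
      have hcpos : (0:ℝ) < Q.card + 1 := by linarith
      have h4 : (4:ℝ) * Q.card + 4 ≠ 0 := by positivity
      apply le_of_eq
      field_simp
      ring
    -- good event inclusion
    set U := (B1 ×ˢ (Set.univ : Set (Fin m → X))) ∪ ((Set.univ : Set (Fin n → X)) ×ˢ B2) with hU
    have hincl : Uᶜ ⊆ Ev := by
      intro Dp hDp
      rw [hU, Set.compl_union] at hDp
      obtain ⟨h1, h2⟩ := hDp
      have hD1 : Dp.1 ∉ B1 := fun hmem => h1 ⟨hmem, Set.mem_univ _⟩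
      have hD2 : Dp.2 ∉ B2 := fun hmem => h2 ⟨Set.mem_univ _, hmem⟩
      rw [hEv, Set.mem_setOf_eq]
      apply det_lemma μ ν Q hQ hrange hn0 hm0 hα hα1 (pmf_sum_toReal' μ) Dp.1 Dp.2
      · intro φ hφ
        have hnot : Dp.1 ∉ {D : Fin n → X | (n:ℝ)*(α/3) < |∑ i, (φ (D i) - pm φ)|} :=
          fun hx => hD1 (Set.mem_biUnion hφ hx)
        rw [Set.mem_setOf_eq, not_lt] at hnot
        have hsum : ∑ i, (φ (Dp.1 i) - pm φ) = (∑ i, φ (Dp.1 i)) - n * pm φ := by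
          rw [Finset.sum_sub_distrib, Finset.sum_const, Finset.card_univ, Fintype.card_fin,
            nsmul_eq_mul]
        rw [hsum] at hnot
        exact hnot
      · intro φ hφ
        have hφ' : φ ∈ Q' := by rw [hQ'def]; exact Finset.mem_insert_of_mem hφ
        have hnot : Dp.2 ∉ {Y : Fin m → X | (m:ℝ)*(α/4) < |∑ j, (wfn μ ν (Y j) * φ (Y j) - pm φ)|} :=
          fun hx => hD2 (Set.mem_biUnion hφ' hx)
        rw [Set.mem_setOf_eq, not_lt] at hnot
        have hsum : ∑ j, (wfn μ ν (Dp.2 j) * φ (Dp.2 j) - pm φ)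
            = (∑ j, wfn μ ν (Dp.2 j) * φ (Dp.2 j)) - m * pm φ := by
          rw [Finset.sum_sub_distrib, Finset.sum_const, Finset.card_univ, Fintype.card_fin,
            nsmul_eq_mul]
        rw [hsum] at hnot
        exact hnot
      · have hφ' : (fun _ : X => (1:ℝ)) ∈ Q' := by rw [hQ'def]; exact Finset.mem_insert_self _ _
        have hnot : Dp.2 ∉ {Y : Fin m → X |
            (m:ℝ)*(α/4) < |∑ j, (wfn μ ν (Y j) * (fun _ : X => (1:ℝ)) (Y j) - pm (fun _ : X => (1:ℝ)))|} :=
          fun hx => hD2 (Set.mem_biUnion hφ' hx)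
        rw [Set.mem_setOf_eq, not_lt] at hnot
        have hpm1 : pm (fun _ : X => (1:ℝ)) = 1 := by
          rw [hpm]
          simpa using pmf_sum_toReal' μ
        have hsum : ∑ j, (wfn μ ν (Dp.2 j) * (fun _ : X => (1:ℝ)) (Dp.2 j) - pm (fun _ : X => (1:ℝ)))
            = (∑ j, wfn μ ν (Dp.2 j)) - m := by
          rw [hpm1]
          simp only [mul_one]
          rw [Finset.sum_sub_distrib, Finset.sum_const, Finset.card_univ, Fintype.card_fin,
            nsmul_eq_mul, mul_one]
        rw [hsum] at hnot
        exact hnot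
    have hUmeas : MeasurableSet U := (Set.toFinite U).measurableSet
    have hPU : P U ≤ ENNReal.ofReal β := by
      refine le_trans (measure_union_le _ _) ?_
      have e1 : P (B1 ×ˢ (Set.univ : Set (Fin m → X)))
          = (Measure.pi fun _ : Fin n => μ.toMeasure) B1 := by
        rw [hP, Measure.prod_prod, measure_univ, mul_one]
      have e2 : P ((Set.univ : Set (Fin n → X)) ×ˢ B2)
          = (Measure.pi fun _ : Fin m => ν.toMeasure) B2 := by
        rw [hP, Measure.prod_prod, measure_univ, one_mul]
      rw [e1, e2]
      refine le_trans (add_le_add hPB1 hPB2) ?_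
      rw [← ENNReal.ofReal_add (by positivity) (by positivity)]
      apply ENNReal.ofReal_le_ofReal
      linarith
    calc ENNReal.ofReal (1 - β) ≤ 1 - ENNReal.ofReal β := by
          apply ENNReal.le_sub_of_add_le_right ENNReal.ofReal_ne_top
          rw [← ENNReal.ofReal_add (by linarith) hβ.le]
          norm_num
      _ ≤ 1 - P U := tsub_le_tsub_left hPU 1
      _ = P Uᶜ := (prob_compl_eq_one_sub hUmeas).symm
      _ ≤ P Ev := measure_mono hincl
  · -- α > 1 : trivial
    push_neg at hα1
    have hEvuniv : Ev = Set.univ := by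
      rw [Set.eq_univ_iff_forall]
      intro Dp
      rw [hEv, Set.mem_setOf_eq]
      haveI : Nonempty (Fin m) := Fin.pos_iff_nonempty.1 hm0
      have hSne : (Finset.univ.image Dp.2).Nonempty := by
        apply Finset.Nonempty.image
        exact Finset.univ_nonempty
      refine le_trans (bestMixErr_le_one hn0 Dp.1 Q hQ hrange _ hSne) (le_of_lt hα1)
    rw [hEvuniv]
    rw [measure_univ]
    exact ENNReal.ofReal_le_one.2 (by linarith)
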